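/- arXiv:0807.2714 — 3 statements merged into one kernel-verified Lean document; each statement's English description precedes it below -/
import Mathlib

section
/- Let k ≥ 1 and m ≥ 1 be integers, n = k·m, and let λ ∈ ℤ^n be the k-fold repetition of the block (m−1, m−2, …, 1, 0), i.e. λ = (m−1,…,1,0, m−1,…,1,0, …, m−1,…,1,0). Then λ is (k+1, 1)-admissible, and λ is the unique (k+1, 1)-admissible element μ ∈ ℤ^n with μ ⪯ λ. -/
open scoped Classical

namespace CCnDAHA

variable {n : ℕ}




/-- σ(λ)_i = +1 if λ_i ≥ 0, −1 otherwise. -/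
def sgn (lam : Fin n → ℤ) (i : Fin n) : ℤ := if 0 ≤ lam i then 1 else -1

/-- `Prec lam i j` : index `i` strictly precedes `j` in the ordering i_1,…,i_n. -/
def Prec (lam : Fin n → ℤ) (i j : Fin n) : Prop :=
  |lam j| < |lam i| ∨
    (|lam i| = |lam j| ∧
      ((0 ≤ lam i ∧ lam j < 0) ∨
       (0 ≤ lam i ∧ 0 ≤ lam j ∧ i < j) ∨
       (lam i < 0 ∧ lam j < 0 ∧ j < i)))

/-- 0-based position of index `i` in the ordering i_1,…,i_n (position m−1). -/
noncomputable def posOf (lam : Fin n → ℤ) (i : Fin n) : ℕ :=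
  (Finset.univ.filter (fun j => Prec lam j i)).card

/-- ρ(λ)_i = σ(λ)_i · (n − m) where i = i_m. -/
noncomputable def rho (lam : Fin n → ℤ) (i : Fin n) : ℤ :=
  sgn lam i * ((n : ℤ) - 1 - (posOf lam i : ℤ))

/-- (a,b)-neighborhood. -/
noncomputable def IsNbhd (a b : ℤ) (lam : Fin n → ℤ) (i j : Fin n) : Prop :=
  |rho lam i| - |rho lam j| = a - 1 ∧
  |lam i| - |lam j| ≤ b ∧
  (|lam i| - |lam j| = b →
    ((0 ≤ lam i ∧ 0 ≤ lam j ∧ j < i) ∨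
     (lam i < 0 ∧ lam j < 0 ∧ i < j) ∨
     (lam i < 0 ∧ 0 ≤ lam j)))

/-- (a,b)-admissible: no (a,b)-neighborhood. -/
noncomputable def Admissible (a b : ℤ) (lam : Fin n → ℤ) : Prop :=
  ∀ i j, ¬ IsNbhd a b lam i j

/-- number of (a,b)-neighborhoods. -/
noncomputable def nbhdCount (a b : ℤ) (lam : Fin n → ℤ) : ℕ :=
  ((Finset.univ : Finset (Fin n × Fin n)).filter (fun p => IsNbhd a b lam p.1 p.2)).card

/-- dot action of the affine simple reflection s_i (0 ≤ i ≤ n, 1-based paper indexing). -/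
noncomputable def dotAct (i : ℕ) (lam : Fin n → ℤ) : Fin n → ℤ := fun j =>
  if i = 0 then (if (j : ℕ) = 0 then -1 - lam j else lam j)
  else if i = n then (if (j : ℕ) + 1 = n then -lam j else lam j)
  else if h1 : (j : ℕ) + 1 = i ∧ i < n then lam ⟨(j : ℕ) + 1, by omega⟩
  else if h2 : (j : ℕ) = i then lam ⟨(j : ℕ) - 1, by have := j.isLt; omega⟩
  else lam j

/-- pairing ⟨λ, α_i⟩, for 0 ≤ i ≤ n. -/
noncomputable def pairing (i : ℕ) (lam : Fin n → ℤ) : ℤ :=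
  if hn : n = 0 then 0
  else if i = 0 then -2 * lam ⟨0, by omega⟩
  else if i = n then 2 * lam ⟨n - 1, by omega⟩
  else lam ⟨(i - 1) % n, Nat.mod_lt _ (by omega)⟩ - lam ⟨i % n, Nat.mod_lt _ (by omega)⟩

/-- partial sum λ_1 + ⋯ + λ_j. -/
def psum (lam : Fin n → ℤ) (j : Fin n) : ℤ :=
  ∑ i ∈ Finset.univ.filter (fun i => i ≤ j), lam i

/-- dominance order: μ ≤ λ. -/
def DomLE (mu lam : Fin n → ℤ) : Prop := ∀ j, psum mu j ≤ psum lam j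

/-- λ⁺ : the weakly decreasing rearrangement of (|λ_1|,…,|λ_n|). -/
noncomputable def lamPlus (lam : Fin n → ℤ) : Fin n → ℤ := fun j =>
  ((Multiset.sort (Multiset.map (fun i => |lam i|) Finset.univ.val) (· ≤ ·)).reverse).getD (j : ℕ) 0

/-- λ ≻ μ. -/
noncomputable def SuccOrd (lam mu : Fin n → ℤ) : Prop :=
  (DomLE (lamPlus mu) (lamPlus lam) ∧ lamPlus lam ≠ lamPlus mu) ∨
  (lamPlus lam = lamPlus mu ∧ DomLE mu lam ∧ lam ≠ mu)

/-- |λ_{i_m}|, with the sentinel value 0 at m = n+1. -/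
noncomputable def absAt (lam : Fin n → ℤ) (m : ℕ) : ℤ :=
  if m = n + 1 then 0
  else ∑ i ∈ Finset.univ.filter (fun i => posOf lam i + 1 = m), |lam i|

/-- σ(λ)_{i_m}, with sentinel value +1 at m = n+1. -/
noncomputable def sgAt (lam : Fin n → ℤ) (m : ℕ) : ℤ :=
  if m = n + 1 then 1
  else ∑ i ∈ Finset.univ.filter (fun i => posOf lam i + 1 = m), sgn lam i

/-- the (1-based) value of the index i_m, with sentinel value n+1 at m = n+1. -/
noncomputable def ixAt (lam : Fin n → ℤ) (m : ℕ) : ℕ :=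
  if m = n + 1 then n + 1
  else ∑ i ∈ Finset.univ.filter (fun i => posOf lam i + 1 = m), ((i : ℕ) + 1)

/-- β_m ∈ {0,1}. -/
noncomputable def betaAt (lam : Fin n → ℤ) (m : ℕ) : ℤ :=
  if (sgAt lam m = 1 ∧ sgAt lam (m + 1) = 1 ∧ ixAt lam (m + 1) < ixAt lam m) ∨
     (sgAt lam m = -1 ∧ sgAt lam (m + 1) = -1 ∧ ixAt lam m < ixAt lam (m + 1)) ∨
     (sgAt lam m = -1 ∧ sgAt lam (m + 1) = 1)
  then 1 else 0

/-- p_m = ⌊(|λ_{i_m}| − |λ_{i_{m+1}}| − β_m)/b⌋ (b plays the role of r−1). -/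
noncomputable def pAt (b : ℤ) (lam : Fin n → ℤ) (m : ℕ) : ℤ :=
  Int.fdiv (absAt lam m - absAt lam (m + 1) - betaAt lam m) b

/-- the b-quotient λ^{quot} (b plays the role of r−1): j-th entry is p_j + ⋯ + p_n
(1-based j = (j:Fin n) + 1). -/
noncomputable def quotOf (b : ℤ) (lam : Fin n → ℤ) : Fin n → ℤ := fun j =>
  ∑ m ∈ Finset.Icc ((j : ℕ) + 1) n, pAt b lam m

/-- fundamental weight ϖ_j (1-based j = (j : Fin n)+1): first j entries 1, rest 0. -/
def varpi (j : Fin n) : Fin n → ℤ := fun i => if i ≤ j then 1 else 0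




/-! ### Auxiliary infrastructure -/

section Infra

variable {lam : Fin n → ℤ}

/-- lexicographic key whose strict order is exactly `Prec`. -/
noncomputable def keyf (lam : Fin n → ℤ) (i : Fin n) : ℤ ×ₗ ℤ :=
  toLex (-|lam i|, if 0 ≤ lam i then ((i : ℕ) : ℤ) else 2 * (n : ℤ) - ((i : ℕ) : ℤ))

lemma prec_iff_keyf {i j : Fin n} :
    Prec lam i j ↔ keyf lam i < keyf lam j := by
  have hi := i.isLt; have hj := j.isLt
  unfold Prec keyf
  rw [Prod.Lex.lt_iff]
  by_cases h1 : 0 ≤ lam i <;> by_cases h2 : 0 ≤ lam j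
  · rw [abs_of_nonneg h1, abs_of_nonneg h2]
    simp only [if_pos h1, if_pos h2, Fin.lt_def, ofLex_toLex]
    omega
  · rw [abs_of_nonneg h1, abs_of_neg (by omega : lam j < 0)]
    simp only [if_pos h1, if_neg h2, Fin.lt_def, ofLex_toLex]
    omega
  · rw [abs_of_neg (by omega : lam i < 0), abs_of_nonneg h2]
    simp only [if_neg h1, if_pos h2, Fin.lt_def, ofLex_toLex]
    omega
  · rw [abs_of_neg (by omega : lam i < 0), abs_of_neg (by omega : lam j < 0)]
    simp only [if_neg h1, if_neg h2, Fin.lt_def, ofLex_toLex]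
    omega

lemma keyf_inj : Function.Injective (keyf lam) := by
  intro i j h
  have hi := i.isLt; have hj := j.isLt
  unfold keyf at h
  have h' : ((-|lam i|, if 0 ≤ lam i then ((i : ℕ) : ℤ) else 2 * (n : ℤ) - ((i : ℕ) : ℤ)) :
      ℤ × ℤ) = (-|lam j|, if 0 ≤ lam j then ((j : ℕ) : ℤ) else 2 * (n : ℤ) - ((j : ℕ) : ℤ)) :=
    toLex.injective h
  have h2 := congrArg Prod.snd h'
  simp only at h2
  apply Fin.ext
  by_cases hA : 0 ≤ lam i <;> by_cases hB : 0 ≤ lam j <;>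
    simp only [if_pos, if_neg, hA, hB] at h2 <;> omega

lemma prec_irrefl (i : Fin n) : ¬ Prec lam i i := by
  rw [prec_iff_keyf]; exact lt_irrefl _

lemma prec_trans {i j l : Fin n} (h1 : Prec lam i j) (h2 : Prec lam j l) : Prec lam i l := by
  rw [prec_iff_keyf] at *; exact lt_trans h1 h2

lemma prec_trichotomy {i j : Fin n} (h : i ≠ j) : Prec lam i j ∨ Prec lam j i := by
  rcases lt_trichotomy (keyf lam i) (keyf lam j) with h' | h' | h'
  · exact Or.inl (prec_iff_keyf.mpr h')
  · exact absurd (keyf_inj h') h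
  · exact Or.inr (prec_iff_keyf.mpr h')

lemma posOf_lt (lam : Fin n → ℤ) (i : Fin n) : posOf lam i < n := by
  have hsub : Finset.univ.filter (fun j => Prec lam j i) ⊆ Finset.univ.erase i := by
    intro j hj
    simp only [Finset.mem_filter, Finset.mem_univ, true_and] at hj
    simp only [Finset.mem_erase, Finset.mem_univ, and_true]
    rintro rfl; exact prec_irrefl _ hj
  have h1 := Finset.card_le_card hsub
  have h2 : (Finset.univ.erase i).card = n - 1 := by
    rw [Finset.card_erase_of_mem (Finset.mem_univ i), Finset.card_univ, Fintype.card_fin]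
  have h3 : 0 < n := i.pos
  unfold posOf
  omega

lemma posOf_lt_of_prec {i j : Fin n} (h : Prec lam i j) : posOf lam i < posOf lam j := by
  apply Finset.card_lt_card
  constructor
  · intro x hx
    simp only [Finset.mem_filter, Finset.mem_univ, true_and] at hx ⊢
    exact prec_trans hx h
  · intro hsub
    have : i ∈ Finset.univ.filter (fun x => Prec lam x i) := by
      apply hsub
      simp only [Finset.mem_filter, Finset.mem_univ, true_and]
      exact h
    simp only [Finset.mem_filter] at this
    exact prec_irrefl _ this.2

lemma posOf_injective : Function.Injective (posOf lam) := by
  intro i j h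
  by_contra hne
  rcases prec_trichotomy (lam := lam) hne with h' | h' <;>
  · have := posOf_lt_of_prec h'
    omega

lemma prec_iff_posOf {i j : Fin n} : Prec lam i j ↔ posOf lam i < posOf lam j := by
  constructor
  · exact posOf_lt_of_prec
  · intro h
    have hne : i ≠ j := by rintro rfl; omega
    rcases prec_trichotomy (lam := lam) hne with h' | h'
    · exact h'
    · exact absurd (posOf_lt_of_prec h') (by omega)

/-- `posOf` as an equivalence `Fin n ≃ Fin n`. -/
noncomputable def pEquiv (lam : Fin n → ℤ) : Fin n ≃ Fin n :=
  Equiv.ofBijective (fun i => ⟨posOf lam i, posOf_lt lam i⟩)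
    (Finite.injective_iff_bijective.mp (fun i j h => posOf_injective (congrArg Fin.val h)))

lemma pEquiv_apply (lam : Fin n → ℤ) (i : Fin n) :
    ((pEquiv lam) i : ℕ) = posOf lam i := rfl

lemma posOf_pEquiv_symm (lam : Fin n → ℤ) (p : Fin n) :
    posOf lam ((pEquiv lam).symm p) = (p : ℕ) := by
  have := (pEquiv lam).apply_symm_apply p
  have := congrArg Fin.val this
  rwa [pEquiv_apply] at this

lemma abs_anti {i j : Fin n} (h : posOf lam i ≤ posOf lam j) : |lam j| ≤ |lam i| := by
  rcases eq_or_ne i j with rfl | hne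
  · exact le_refl _
  · have hlt : posOf lam i < posOf lam j := by
      have := posOf_injective (lam := lam)
      rcases Nat.lt_or_ge (posOf lam i) (posOf lam j) with h' | h'
      · exact h'
      · have : posOf lam i = posOf lam j := le_antisymm h h'
        exact absurd (posOf_injective this) hne
    have hp : Prec lam i j := prec_iff_posOf.mpr hlt
    unfold Prec at hp
    rcases hp with h' | ⟨h', _⟩ <;> omega

lemma abs_rho (lam : Fin n → ℤ) (i : Fin n) :
    |rho lam i| = (n : ℤ) - 1 - (posOf lam i : ℤ) := by
  unfold rho sgn
  have h1 : posOf lam i < n := posOf_lt lam i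
  rw [abs_mul]
  have h2 : |if 0 ≤ lam i then (1:ℤ) else -1| = 1 := by split <;> simp
  rw [h2, one_mul, abs_of_nonneg (by omega : (0:ℤ) ≤ (n : ℤ) - 1 - (posOf lam i : ℤ))]

/-- the absolute value at the `p`-th position. -/
noncomputable def Aof (lam : Fin n → ℤ) (p : Fin n) : ℤ := |lam ((pEquiv lam).symm p)|

lemma Aof_anti {p q : Fin n} (h : p ≤ q) : Aof lam q ≤ Aof lam p := by
  unfold Aof
  apply abs_anti
  rw [posOf_pEquiv_symm, posOf_pEquiv_symm]
  exact h

lemma Aof_nonneg (lam : Fin n → ℤ) (p : Fin n) : 0 ≤ Aof lam p := abs_nonneg _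

lemma Aof_pEquiv (lam : Fin n → ℤ) (i : Fin n) : Aof lam (pEquiv lam i) = |lam i| := by
  unfold Aof
  rw [Equiv.symm_apply_apply]

instance : IsAntisymm ℤ (fun a b : ℤ => b ≤ a) := ⟨fun _ _ h1 h2 => le_antisymm h2 h1⟩

lemma lamPlus_eq_Aof (lam : Fin n → ℤ) (p : Fin n) : lamPlus lam p = Aof lam p := by
  classical
  set s : Multiset ℤ := Multiset.map (fun i => |lam i|) Finset.univ.val with hs
  have hperm : (Multiset.sort s (· ≤ ·)).reverse.Perm (List.ofFn (Aof lam)) := by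
    rw [← Multiset.coe_eq_coe]
    have h1 : ((Multiset.sort s (· ≤ ·)).reverse : Multiset ℤ) = s := by
      have := Multiset.sort_eq s (· ≤ ·)
      calc ((Multiset.sort s (· ≤ ·)).reverse : Multiset ℤ)
          = ((Multiset.sort s (· ≤ ·) : List ℤ) : Multiset ℤ) :=
            Multiset.coe_eq_coe.mpr (List.reverse_perm _)
        _ = s := this
    rw [h1]
    have h2 : ((List.ofFn (Aof lam)) : Multiset ℤ) =
        Multiset.map (Aof lam) Finset.univ.val := by
      rw [List.ofFn_eq_map]
      rfl
    rw [h2, hs]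
    have h3 : Multiset.map (Aof lam) Finset.univ.val =
        Multiset.map (fun i => |lam i|) (Multiset.map ((pEquiv lam).symm) Finset.univ.val) := by
      rw [Multiset.map_map]
      rfl
    rw [h3]
    congr 1
    have : Multiset.map ((pEquiv lam).symm) Finset.univ.val =
        (Finset.univ.map (pEquiv lam).symm.toEmbedding).val := rfl
    rw [this, Finset.map_univ_equiv]
  have hs1 : (Multiset.sort s (· ≤ ·)).reverse.Pairwise (fun a b : ℤ => b ≤ a) := by
    rw [List.pairwise_reverse]
    exact Multiset.pairwise_sort _ _
  have hs2 : (List.ofFn (Aof lam)).Pairwise (fun a b : ℤ => b ≤ a) := by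
    rw [List.pairwise_ofFn]
    intro i j hij
    exact Aof_anti (le_of_lt hij)
  have heq : (Multiset.sort s (· ≤ ·)).reverse = List.ofFn (Aof lam) :=
    List.Perm.eq_of_pairwise' hs1 hs2 hperm
  unfold lamPlus
  rw [← hs, heq]
  have hlen : (p : ℕ) < (List.ofFn (Aof lam)).length := by
    rw [List.length_ofFn]; exact p.isLt
  rw [List.getD_eq_getElem _ _ hlen]
  simp [List.getElem_ofFn]

end Infra


section Chain

variable {k : ℕ} {mu : Fin n → ℤ}

lemma nbhd_pos_eq {i j : Fin n} (h : |rho mu i| - |rho mu j| = (k : ℤ) + 1 - 1) :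
    posOf mu j = posOf mu i + k := by
  rw [abs_rho, abs_rho] at h
  have h1 := posOf_lt mu i
  have h2 := posOf_lt mu j
  omega

lemma pos_eq_nbhd {i j : Fin n} (h : posOf mu j = posOf mu i + k) :
    |rho mu i| - |rho mu j| = (k : ℤ) + 1 - 1 := by
  rw [abs_rho, abs_rho]
  omega

lemma chain_ge (hadm : Admissible ((k : ℤ) + 1) 1 mu) {i j : Fin n}
    (h : posOf mu j = posOf mu i + k) : |mu j| + 1 ≤ |mu i| := by
  by_contra hcon
  have hle : |mu j| ≤ |mu i| := abs_anti (by omega)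
  have heq : |mu i| = |mu j| := by omega
  exact hadm i j ⟨pos_eq_nbhd h, by omega, by omega⟩

lemma chain_eq_sign (hadm : Admissible ((k : ℤ) + 1) 1 mu) {i j : Fin n}
    (h : posOf mu j = posOf mu i + k) (heq : |mu i| - |mu j| = 1) :
    ¬ ((0 ≤ mu i ∧ 0 ≤ mu j ∧ j < i) ∨
       (mu i < 0 ∧ mu j < 0 ∧ i < j) ∨
       (mu i < 0 ∧ 0 ≤ mu j)) := by
  intro hC
  exact hadm i j ⟨pos_eq_nbhd h, by omega, fun _ => hC⟩

lemma Aof_chain (hadm : Admissible ((k : ℤ) + 1) 1 mu) {p : ℕ} (hp : p < n)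
    (hpk : p + k < n) : Aof mu ⟨p + k, hpk⟩ + 1 ≤ Aof mu ⟨p, hp⟩ := by
  apply chain_ge hadm
  rw [posOf_pEquiv_symm, posOf_pEquiv_symm]

/-- key lower bound: positions force values at least those of the model weight. -/
lemma Aof_lower {m : ℕ} (hn : n = k * m) (hk : 1 ≤ k)
    (hadm : Admissible ((k : ℤ) + 1) 1 mu) :
    ∀ d p (hp : p < n), n - p ≤ d → (m : ℤ) - 1 - ((p / k : ℕ) : ℤ) ≤ Aof mu ⟨p, hp⟩ := by
  intro d
  induction d using Nat.strong_induction_on with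
  | _ d ih =>
    intro p hp hd
    by_cases hpk : p + k < n
    · have h1 := ih (n - (p + k)) (by omega) (p + k) hpk (le_refl _)
      have h2 := Aof_chain hadm hp hpk
      have h3 : (p + k) / k = p / k + 1 := by
        rw [Nat.add_div_right _ (by omega)]
      rw [h3] at h1
      push_cast at h1 ⊢
      omega
    · have h4 : (m - 1) * k ≤ p := by
        have h4a : (m - 1) * k = m * k - 1 * k := tsub_mul m 1 k
        have h4b : m * k = k * m := Nat.mul_comm m k
        omega
      have h5 : m - 1 ≤ p / k := (Nat.le_div_iff_mul_le (by omega)).mpr h4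
      have h6 := Aof_nonneg mu ⟨p, hp⟩
      have h7 : (m : ℤ) - 1 - ((p / k : ℕ) : ℤ) ≤ 0 := by omega
      omega

end Chain


section Model

/-- base-`k` comparison lemma. -/
lemma base_lt_iff {k a a' b b' : ℕ} (hb : b < k) (hb' : b' < k) :
    k * a + b < k * a' + b' ↔ a < a' ∨ (a = a' ∧ b < b') := by
  constructor
  · intro h
    rcases lt_trichotomy a a' with h1 | h1 | h1
    · exact Or.inl h1
    · subst h1; exact Or.inr ⟨rfl, by omega⟩
    · exfalso
      have h2 : k * (a' + 1) ≤ k * a := Nat.mul_le_mul_left k h1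
      have h3 : k * (a' + 1) = k * a' + k := Nat.mul_succ k a'
      omega
  · rintro (h | ⟨rfl, h⟩)
    · have h2 : k * (a + 1) ≤ k * a' := Nat.mul_le_mul_left k h
      have h3 : k * (a + 1) = k * a + k := Nat.mul_succ k a
      omega
    · omega

lemma base_eq {k a a' b b' : ℕ} (hb : b < k) (hb' : b' < k)
    (h : k * a + b = k * a' + b') : a = a' ∧ b = b' := by
  rcases lt_trichotomy a a' with h1 | h1 | h1
  · have := (base_lt_iff hb hb').mpr (Or.inl h1); omega
  · subst h1; omega
  · have := (base_lt_iff hb' hb).mpr (Or.inl h1); omega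

variable {k m : ℕ}

/-- the model weight: `k`-fold repetition of `(m-1, …, 1, 0)`. -/
def lamMod (k m : ℕ) : Fin (k * m) → ℤ := fun i => (m : ℤ) - 1 - (((i : ℕ) % m : ℕ) : ℤ)

/-- the position function of the model weight. -/
def gMod (m : ℕ) (k : ℕ) (i : Fin (k * m)) : ℕ := k * ((i : ℕ) % m) + (i : ℕ) / m

variable (hk : 1 ≤ k) (hm : 1 ≤ m)

section
include hm

lemma mod_lt_m (i : Fin (k * m)) : (i : ℕ) % m < m := Nat.mod_lt _ (by omega)

lemma div_lt_k (i : Fin (k * m)) : (i : ℕ) / m < k :=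
  (Nat.div_lt_iff_lt_mul (by omega)).mpr i.isLt

lemma gMod_lt (i : Fin (k * m)) : gMod m k i < k * m := by
  have h1 : (i : ℕ) % m + 1 ≤ m := mod_lt_m hm i
  have h2 : k * ((i : ℕ) % m + 1) ≤ k * m := Nat.mul_le_mul_left k h1
  have h3 : k * ((i : ℕ) % m + 1) = k * ((i : ℕ) % m) + k := Nat.mul_succ _ _
  have h4 := div_lt_k hm i
  unfold gMod
  omega

lemma lamMod_nonneg (i : Fin (k * m)) : 0 ≤ lamMod k m i := by
  have := mod_lt_m hm i
  unfold lamMod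
  have : (((i : ℕ) % m : ℕ) : ℤ) < (m : ℤ) := by exact_mod_cast this
  omega

lemma gMod_inj : Function.Injective (gMod m (k := k)) := by
  intro i j h
  have h1 := base_eq (div_lt_k hm i) (div_lt_k hm j) h
  have h2 := Nat.div_add_mod (i : ℕ) m
  have h3 := Nat.div_add_mod (j : ℕ) m
  apply Fin.ext
  have h4 : m * ((i : ℕ) / m) = m * ((j : ℕ) / m) := by rw [h1.2]
  omega

lemma prec_lamMod_iff {i j : Fin (k * m)} :
    Prec (lamMod k m) i j ↔ gMod m k i < gMod m k j := by
  have hni := lamMod_nonneg hm i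
  have hnj := lamMod_nonneg hm j
  have hmi := mod_lt_m hm i
  have hmj := mod_lt_m hm j
  have hdi := div_lt_k hm i
  have hdj := div_lt_k hm j
  have h2 := Nat.div_add_mod (i : ℕ) m
  have h3 := Nat.div_add_mod (j : ℕ) m
  unfold Prec
  rw [abs_of_nonneg hni, abs_of_nonneg hnj, gMod, gMod, base_lt_iff hdi hdj]
  unfold lamMod at hni hnj ⊢
  constructor
  · rintro (h | ⟨he, h⟩)
    · left
      have : (((i : ℕ) % m : ℕ) : ℤ) < (((j : ℕ) % m : ℕ) : ℤ) := by omega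
      exact_mod_cast this
    · rcases h with ⟨_, hneg⟩ | ⟨_, _, hij⟩ | ⟨hneg, _⟩
      · omega
      · right
        have hmm : (i : ℕ) % m = (j : ℕ) % m := by
          have : (((i : ℕ) % m : ℕ) : ℤ) = (((j : ℕ) % m : ℕ) : ℤ) := by omega
          exact_mod_cast this
        refine ⟨hmm, ?_⟩
        have hij' : (i : ℕ) < (j : ℕ) := hij
        have h5 : m * ((i : ℕ) / m) < m * ((j : ℕ) / m) := by omega
        exact lt_of_mul_lt_mul_left h5 (by omega)
      · omega
  · rintro (h | ⟨he, h⟩)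
    · left
      have : (((i : ℕ) % m : ℕ) : ℤ) < (((j : ℕ) % m : ℕ) : ℤ) := by exact_mod_cast h
      omega
    · right
      constructor
      · have : (((i : ℕ) % m : ℕ) : ℤ) = (((j : ℕ) % m : ℕ) : ℤ) := by exact_mod_cast he
        omega
      · right; left
        refine ⟨hni, hnj, ?_⟩
        show i < j
        rw [Fin.lt_def]
        have h5 : m * ((i : ℕ) / m) < m * ((j : ℕ) / m) :=
          mul_lt_mul_of_pos_left h (by omega)
        omega

end

section
include hk hm

lemma posOf_lamMod (i : Fin (k * m)) : posOf (lamMod k m) i = gMod m k i := by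
  classical
  unfold posOf
  have h1 : (Finset.univ.filter (fun j => Prec (lamMod k m) j i)) =
      (Finset.univ.filter (fun j => gMod m k j < gMod m k i)) := by
    apply Finset.filter_congr
    intro j _
    exact prec_lamMod_iff hm
  rw [h1]
  have h2 : (Finset.univ.filter (fun j : Fin (k * m) => gMod m k j < gMod m k i)).card =
      (Finset.univ.filter (fun y : Fin (k * m) => (y : ℕ) < gMod m k i)).card := by
    apply Finset.card_bij (fun j _ => (⟨gMod m k j, gMod_lt hm j⟩ : Fin (k * m)))
    · intro a ha
      simp only [Finset.mem_filter, Finset.mem_univ, true_and] at ha ⊢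
      exact ha
    · intro a ha b hb hab
      exact gMod_inj hm (congrArg Fin.val hab)
    · intro y hy
      simp only [Finset.mem_filter, Finset.mem_univ, true_and] at hy
      -- y < gMod i < k*m, need surjectivity of gMod
      have hbij : Function.Bijective (fun j : Fin (k * m) =>
          (⟨gMod m k j, gMod_lt hm j⟩ : Fin (k * m))) :=
        Finite.injective_iff_bijective.mp (fun a b hab => gMod_inj hm (congrArg Fin.val hab))
      obtain ⟨j, hj⟩ := hbij.2 y
      refine ⟨j, ?_, hj⟩
      simp only [Finset.mem_filter, Finset.mem_univ, true_and]
      have : gMod m k j = (y : ℕ) := congrArg Fin.val hj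
      omega
  rw [h2]
  have h3 : (Finset.univ.filter (fun y : Fin (k * m) => (y : ℕ) < gMod m k i)) =
      Finset.Iio (⟨gMod m k i, gMod_lt hm i⟩ : Fin (k * m)) := by
    ext y
    simp [Fin.lt_def]
  rw [h3, Fin.card_Iio]

lemma Aof_lamMod (p : Fin (k * m)) :
    Aof (lamMod k m) p = (m : ℤ) - 1 - (((p : ℕ) / k : ℕ) : ℤ) := by
  set idx := (pEquiv (lamMod k m)).symm p with hidx
  have h1 : posOf (lamMod k m) idx = (p : ℕ) := posOf_pEquiv_symm _ p
  rw [posOf_lamMod hk hm] at h1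
  have h2 : (p : ℕ) = k * ((p : ℕ) / k) + (p : ℕ) % k := (Nat.div_add_mod _ _).symm
  have h3 : gMod m k idx = k * ((p : ℕ) / k) + (p : ℕ) % k := by omega
  have h4 := base_eq (div_lt_k hm idx) (Nat.mod_lt _ (by omega : 0 < k)) h3
  unfold Aof
  rw [← hidx, abs_of_nonneg (lamMod_nonneg hm idx)]
  unfold lamMod
  rw [h4.1]

lemma lamPlus_lamMod (p : Fin (k * m)) :
    lamPlus (lamMod k m) p = (m : ℤ) - 1 - (((p : ℕ) / k : ℕ) : ℤ) := by
  rw [lamPlus_eq_Aof, Aof_lamMod hk hm]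

lemma admissible_lamMod : Admissible ((k : ℤ) + 1) 1 (lamMod k m) := by
  rintro i j ⟨h1, h2, h3⟩
  have hpos := nbhd_pos_eq h1
  rw [posOf_lamMod hk hm, posOf_lamMod hk hm] at hpos
  unfold gMod at hpos
  have hpos' : k * ((j : ℕ) % m) + (j : ℕ) / m = k * ((i : ℕ) % m + 1) + (i : ℕ) / m := by
    have h8 := Nat.mul_add k ((i : ℕ) % m) 1
    have h9 : k * 1 = k := Nat.mul_one k
    omega
  have h4 := base_eq (div_lt_k hm j) (div_lt_k hm i) hpos'
  have hmi := mod_lt_m hm i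
  have hmj := mod_lt_m hm j
  have hdiff : |lamMod k m i| - |lamMod k m j| = 1 := by
    rw [abs_of_nonneg (lamMod_nonneg hm i), abs_of_nonneg (lamMod_nonneg hm j)]
    unfold lamMod
    have hc : (((j : ℕ) % m : ℕ) : ℤ) = (((i : ℕ) % m : ℕ) : ℤ) + 1 := by
      exact_mod_cast congrArg (fun x : ℕ => (x : ℤ)) h4.1
    omega
  have hji : (j : ℕ) = (i : ℕ) + 1 := by
    have h5 := Nat.div_add_mod (i : ℕ) m
    have h6 := Nat.div_add_mod (j : ℕ) m
    have h7 : m * ((i : ℕ) / m) = m * ((j : ℕ) / m) := by rw [h4.2]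
    omega
  rcases h3 hdiff with ⟨_, _, hlt⟩ | ⟨hneg, _⟩ | ⟨hneg, _⟩
  · rw [Fin.lt_def] at hlt; omega
  · have := lamMod_nonneg hm i; omega
  · have := lamMod_nonneg hm i; omega

end

end Model


section Count

lemma divSubK {k p : ℕ} (hk : 0 < k) (h : k ≤ p) : (p - k) / k = p / k - 1 := by
  rcases Nat.exists_eq_add_of_le h with ⟨q, rfl⟩
  rw [show k + q = q + k by omega, Nat.add_sub_cancel, Nat.add_div_right _ hk,
    Nat.add_sub_cancel]

/-- number of indices in the prefix of length `t` with value `v`. -/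
noncomputable def Ncnt (mu : Fin n → ℤ) (t v : ℕ) : ℕ :=
  (Finset.univ.filter (fun i : Fin n => (i : ℕ) < t ∧ mu i = (v : ℤ))).card

/-- number of indices in the prefix of length `t` with value at least `c`. -/
noncomputable def Ngeq (mu : Fin n → ℤ) (t c : ℕ) : ℕ :=
  (Finset.univ.filter (fun i : Fin n => (i : ℕ) < t ∧ (c : ℤ) ≤ mu i)).card

lemma card_prefix (t : ℕ) (ht : t ≤ n) :
    (Finset.univ.filter (fun i : Fin n => (i : ℕ) < t)).card = t := by
  have himg : (Finset.univ.filter (fun i : Fin n => (i : ℕ) < t)).image Fin.val =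
      Finset.range t := by
    ext x
    simp only [Finset.mem_image, Finset.mem_filter, Finset.mem_univ, true_and,
      Finset.mem_range]
    constructor
    · rintro ⟨i, hi, rfl⟩; exact hi
    · intro hx; exact ⟨⟨x, by omega⟩, hx, rfl⟩
  have := Finset.card_image_of_injective
    (Finset.univ.filter (fun i : Fin n => (i : ℕ) < t)) Fin.val_injective
  rw [himg] at this
  rw [← this, Finset.card_range]

variable {m : ℕ} {mu : Fin n → ℤ}

section
variable (hm : 1 ≤ m) (hnn : ∀ i, 0 ≤ mu i) (hub : ∀ i, mu i ≤ (m : ℤ) - 1)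
include hm hnn hub

lemma Ncnt_total (t : ℕ) (ht : t ≤ n) :
    ∑ v ∈ Finset.range m, Ncnt mu t v = t := by
  classical
  conv_rhs => rw [← card_prefix t ht]
  rw [Finset.card_eq_sum_card_fiberwise
    (f := fun i => (mu i).toNat) (t := Finset.range m) ?_]
  · apply Finset.sum_congr rfl
    intro v _
    unfold Ncnt
    rw [Finset.filter_filter]
    congr 1
    apply Finset.filter_congr
    intro i _
    have h1 := hnn i
    have h2 := Int.toNat_of_nonneg h1
    constructor
    · rintro ⟨h3, h4⟩; exact ⟨h3, by omega⟩
    · rintro ⟨h3, h4⟩; exact ⟨h3, by omega⟩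
  · intro i _
    simp only [Finset.mem_coe, Finset.mem_range]
    have h1 := hnn i
    have h2 := hub i
    have h3 := Int.toNat_of_nonneg h1
    omega

lemma Ngeq_eq_sum (t c : ℕ) (hc1 : 1 ≤ c) :
    Ngeq mu t c = ∑ v ∈ Finset.Icc c (m - 1), Ncnt mu t v := by
  classical
  unfold Ngeq
  rw [Finset.card_eq_sum_card_fiberwise
    (f := fun i => (mu i).toNat) (t := Finset.Icc c (m - 1)) ?_]
  · apply Finset.sum_congr rfl
    intro v hv
    simp only [Finset.mem_Icc] at hv
    unfold Ncnt
    rw [Finset.filter_filter]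
    congr 1
    apply Finset.filter_congr
    intro i _
    have h1 := hnn i
    have h2 := Int.toNat_of_nonneg h1
    constructor
    · rintro ⟨⟨h3, _⟩, h4⟩; exact ⟨h3, by omega⟩
    · rintro ⟨h3, h4⟩
      refine ⟨⟨h3, ?_⟩, by omega⟩
      have : (c : ℤ) ≤ (v : ℤ) := by exact_mod_cast hv.1
      omega
  · intro i hi
    simp only [Finset.coe_filter, Set.mem_setOf_eq, Finset.mem_univ, true_and] at hi
    simp only [Finset.mem_coe, Finset.mem_Icc]
    have h1 := hnn i
    have h2 := hub i
    have h3 := Int.toNat_of_nonneg h1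
    have h4 : (c : ℤ) ≤ mu i := hi.2
    have hm' : (1 : ℤ) ≤ (m : ℤ) := by exact_mod_cast hm
    omega

/-- layer-cake decomposition of a prefix sum. -/
lemma prefix_sum_eq_sum_Ngeq (t : ℕ) :
    ∑ i ∈ Finset.univ.filter (fun i : Fin n => (i : ℕ) < t), mu i =
      ∑ c ∈ Finset.Icc 1 (m - 1), (Ngeq mu t c : ℤ) := by
  classical
  have hstep : ∀ i : Fin n, mu i =
      ∑ c ∈ Finset.Icc 1 (m - 1), (if (c : ℤ) ≤ mu i then (1 : ℤ) else 0) := by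
    intro i
    rw [Finset.sum_boole]
    have hfil : (Finset.Icc 1 (m - 1) : Finset ℕ).filter (fun c : ℕ => (c : ℤ) ≤ mu i) =
        (Finset.Icc 1 ((mu i).toNat) : Finset ℕ) := by
      ext c
      simp only [Finset.mem_filter, Finset.mem_Icc]
      have h1 := hnn i
      have h2 := Int.toNat_of_nonneg h1
      have h3 := hub i
      have hm' : (1 : ℤ) ≤ (m : ℤ) := by exact_mod_cast hm
      constructor
      · rintro ⟨⟨hc1, hc2⟩, hc3⟩
        exact ⟨hc1, by omega⟩
      · rintro ⟨hc1, hc2⟩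
        have hc3 : (c : ℤ) ≤ ((mu i).toNat : ℤ) := by exact_mod_cast hc2
        refine ⟨⟨hc1, ?_⟩, by omega⟩
        omega
    rw [hfil, Nat.card_Icc]
    have h1 := hnn i
    have h2 := Int.toNat_of_nonneg h1
    omega
  calc ∑ i ∈ Finset.univ.filter (fun i : Fin n => (i : ℕ) < t), mu i
      = ∑ i ∈ Finset.univ.filter (fun i : Fin n => (i : ℕ) < t),
          ∑ c ∈ Finset.Icc 1 (m - 1), (if (c : ℤ) ≤ mu i then (1 : ℤ) else 0) := by
        apply Finset.sum_congr rfl; intro i _; exact hstep i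
    _ = ∑ c ∈ Finset.Icc 1 (m - 1),
          ∑ i ∈ Finset.univ.filter (fun i : Fin n => (i : ℕ) < t),
            (if (c : ℤ) ≤ mu i then (1 : ℤ) else 0) := Finset.sum_comm
    _ = ∑ c ∈ Finset.Icc 1 (m - 1), (Ngeq mu t c : ℤ) := by
        apply Finset.sum_congr rfl
        intro c _
        rw [Finset.sum_boole, Finset.filter_filter]
        rfl

end

lemma psum_eq_prefix (f : Fin n → ℤ) (j : Fin n) :
    psum f j = ∑ i ∈ Finset.univ.filter (fun i : Fin n => (i : ℕ) < (j : ℕ) + 1), f i := by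
  unfold psum
  congr 1
  apply Finset.filter_congr
  intro i _
  simp only [Fin.le_def]
  omega

lemma eq_of_psum_eq {f g : Fin n → ℤ} (h : ∀ j, psum f j = psum g j) : f = g := by
  classical
  funext i
  by_cases hi : (i : ℕ) = 0
  · have hfil : Finset.univ.filter (fun x : Fin n => x ≤ i) = {i} := by
      ext x
      simp only [Finset.mem_filter, Finset.mem_univ, true_and, Finset.mem_singleton,
        Fin.le_def, Fin.ext_iff]
      omega
    have hf := h i
    unfold psum at hf
    rw [hfil, Finset.sum_singleton, Finset.sum_singleton] at hf
    exact hf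
  · set ip : Fin n := ⟨(i : ℕ) - 1, by have := i.isLt; omega⟩ with hip
    have hfil : Finset.univ.filter (fun x : Fin n => x ≤ i) =
        insert i (Finset.univ.filter (fun x : Fin n => x ≤ ip)) := by
      ext x
      simp only [Finset.mem_filter, Finset.mem_univ, true_and, Finset.mem_insert,
        Fin.le_def, Fin.ext_iff, hip]
      omega
    have hnotmem : i ∉ Finset.univ.filter (fun x : Fin n => x ≤ ip) := by
      simp only [Finset.mem_filter, Finset.mem_univ, true_and, Fin.le_def, hip]
      omega
    have hf := h i
    have hg := h ip
    unfold psum at hf hg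
    rw [hfil, Finset.sum_insert hnotmem, Finset.sum_insert hnotmem] at hf
    omega

/-- lower bound for the top part of a monotone count. -/
lemma top_sum_lower {g : ℕ → ℕ} {t q s c : ℕ} (hm : 1 ≤ m)
    (hmono : ∀ v w, v ≤ w → w ≤ m - 1 → g v ≤ g w)
    (htot : ∑ v ∈ Finset.range m, g v = t)
    (ht : t = q * m + s) (hs : s < m) (hc1 : 1 ≤ c) (hc2 : c ≤ m - 1) :
    q * (m - c) + min s (m - c) ≤ ∑ v ∈ Finset.Icc c (m - 1), g v := by
  classical
  set j := m - c with hj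
  set N := g c with hN
  set T := ∑ v ∈ Finset.Icc c (m - 1), g v with hT
  have hIcc : Finset.Icc c (m - 1) = Finset.Ico c m := by
    rw [← Finset.Ico_add_one_right_eq_Icc]
    congr 1
    omega
  have hcardIcc : (Finset.Icc c (m - 1)).card = j := by
    rw [Nat.card_Icc]; omega
  have h1 : j * N ≤ T := by
    have := Finset.card_nsmul_le_sum (Finset.Icc c (m - 1)) g N ?_
    · rw [hcardIcc, smul_eq_mul] at this; exact this
    · intro v hv
      simp only [Finset.mem_Icc] at hv
      exact hmono c v hv.1 hv.2
  have h2 : ∑ v ∈ Finset.Ico 0 c, g v ≤ c * N := by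
    have := Finset.sum_le_card_nsmul (Finset.Ico 0 c) g N ?_
    · rw [Nat.card_Ico, smul_eq_mul] at this
      simpa using this
    · intro v hv
      simp only [Finset.mem_Ico] at hv
      exact hmono v c (by omega) hc2
  have h3 : ∑ v ∈ Finset.Ico 0 c, g v + T = t := by
    rw [hT, hIcc]
    rw [Finset.sum_Ico_consecutive _ (by omega : 0 ≤ c) (by omega : c ≤ m)]
    rw [← htot, Finset.range_eq_Ico]
  rcases le_or_gt N q with hNq | hNq
  · have h4 : c * N ≤ c * q := Nat.mul_le_mul_left c hNq
    have h5 : q * c + q * j = q * m := by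
      rw [← Nat.mul_add]
      congr 1
      omega
    have h6 : q * c = c * q := Nat.mul_comm q c
    have h7 : min s j ≤ s := Nat.min_le_left s j
    omega
  · have h4 : j * (q + 1) ≤ j * N := Nat.mul_le_mul_left j hNq
    have h5 : j * (q + 1) = j * q + j := Nat.mul_succ j q
    have h6 : j * q = q * j := Nat.mul_comm j q
    have h7 : min s j ≤ j := Nat.min_le_right s j
    omega

end Count


section MainArg

variable {k m : ℕ} {mu : Fin (k * m) → ℤ}

section
variable (hk : 1 ≤ k) (hm : 1 ≤ m)
  (hadm : Admissible ((k : ℤ) + 1) 1 mu)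
  (hAeq : ∀ p : Fin (k * m), Aof mu p = (m : ℤ) - 1 - (((p : ℕ) / k : ℕ) : ℤ))

include hAeq in
lemma habs_of_hAeq (i : Fin (k * m)) :
    |mu i| = (m : ℤ) - 1 - (((posOf mu i) / k : ℕ) : ℤ) := by
  have h := hAeq (pEquiv mu i)
  rw [Aof_pEquiv] at h
  exact h

include hAeq in
lemma habs_nat (i : Fin (k * m)) :
    (mu i).natAbs = m - 1 - posOf mu i / k ∧ posOf mu i / k ≤ m - 1 := by
  have h1 := habs_of_hAeq hAeq i
  have h2 : (0 : ℤ) ≤ |mu i| := abs_nonneg _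
  have h3 : |mu i| = ((mu i).natAbs : ℤ) := Int.abs_eq_natAbs _
  generalize hD : posOf mu i / k = D at h1 ⊢
  constructor <;> omega

include hk hm hadm hAeq in
lemma mu_nonneg : ∀ i, 0 ≤ mu i := by
  suffices h : ∀ v : ℕ, ∀ i, (mu i).natAbs = v → 0 ≤ mu i by
    intro i; exact h _ i rfl
  intro v
  induction v using Nat.strong_induction_on with
  | _ v ih =>
    intro i hv
    by_contra hneg
    push_neg at hneg
    obtain ⟨h1, h1b⟩ := habs_nat hAeq i
    have hpk := Nat.div_add_mod (posOf mu i) k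
    have hmod : posOf mu i % k < k := Nat.mod_lt _ (by omega)
    generalize hD : posOf mu i / k = D at h1 h1b hpk
    have habs1 : 1 ≤ (mu i).natAbs := by omega
    have hdk : D ≤ m - 2 := by omega
    have hm2 : 2 ≤ m := by omega
    have hplt : posOf mu i + k < k * m := by
      have h4 : k * D ≤ k * (m - 2) := Nat.mul_le_mul_left k hdk
      have h5 : k * (m - 2) + k * 1 + k * 1 = k * m := by
        rw [← Nat.mul_add, ← Nat.mul_add]
        congr 1
        omega
      omega
    set j := (pEquiv mu).symm ⟨posOf mu i + k, hplt⟩ with hj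
    have hpj : posOf mu j = posOf mu i + k := posOf_pEquiv_symm mu _
    obtain ⟨h6, h6b⟩ := habs_nat hAeq j
    rw [hpj, Nat.add_div_right _ (show 0 < k by omega), hD] at h6 h6b
    have heq : |mu i| - |mu j| = 1 := by
      have hA := Int.abs_eq_natAbs (mu i)
      have hB := Int.abs_eq_natAbs (mu j)
      omega
    have hsign := chain_eq_sign hadm (by rw [hpj]) heq
    push_neg at hsign
    have hmj : mu j < 0 := hsign.2.2 hneg
    have hnatj : (mu j).natAbs = v - 1 := by omega
    exact absurd (ih (v - 1) (by omega) j hnatj) (by omega)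

variable (hnn : ∀ i, 0 ≤ mu i)

include hk hm hadm hAeq hnn in
lemma chain_lt {i j : Fin (k * m)} (h : posOf mu j = posOf mu i + k) : i < j := by
  obtain ⟨h1, h1b⟩ := habs_nat hAeq i
  obtain ⟨h2, h2b⟩ := habs_nat hAeq j
  rw [h, Nat.add_div_right _ (show 0 < k by omega)] at h2 h2b
  have heq : |mu i| - |mu j| = 1 := by
    have hA := Int.abs_eq_natAbs (mu i)
    have hB := Int.abs_eq_natAbs (mu j)
    generalize hD : posOf mu i / k = D at h1 h1b h2 h2b
    omega
  have hsign := chain_eq_sign hadm h heq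
  push_neg at hsign
  have hne : i ≠ j := by
    rintro rfl
    omega
  exact lt_of_le_of_ne (hsign.1 (hnn i) (hnn j)) hne

include hk hm hadm hAeq hnn in
lemma Ncnt_step (t : ℕ) (v : ℕ) (hv1 : 1 ≤ v) (hv2 : v ≤ m - 1) :
    Ncnt mu t (v - 1) ≤ Ncnt mu t v := by
  classical
  have hkey : ∀ j : Fin (k * m), mu j = ((v - 1 : ℕ) : ℤ) → k ≤ posOf mu j ∧
      posOf mu j / k = m - v := by
    intro j hmuj
    obtain ⟨h1, h1b⟩ := habs_nat hAeq j
    have h2 : (mu j).natAbs = v - 1 := by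
      have := hnn j
      omega
    have h3 : posOf mu j / k = m - v := by
      generalize hD : posOf mu j / k = D at h1 h1b ⊢
      omega
    refine ⟨?_, h3⟩
    have h4 : 1 ≤ posOf mu j / k := by rw [h3]; omega
    exact (Nat.one_le_div_iff (by omega)).mp h4
  set f : Fin (k * m) → Fin (k * m) :=
    fun j => (pEquiv mu).symm ⟨posOf mu j - k, by have := posOf_lt mu j; omega⟩ with hf
  have hposf : ∀ j, posOf mu (f j) = posOf mu j - k := by
    intro j
    rw [hf]
    exact posOf_pEquiv_symm mu _
  apply Finset.card_le_card_of_injOn f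
  · intro j hj
    simp only [Finset.coe_filter, Set.mem_setOf_eq, Finset.mem_coe, Finset.mem_filter, Finset.mem_univ, true_and] at hj ⊢
    obtain ⟨hjt, hjv⟩ := hj
    obtain ⟨hpk, hdiv⟩ := hkey j hjv
    have hpi : posOf mu (f j) = posOf mu j - k := hposf j
    have hchain : posOf mu j = posOf mu (f j) + k := by omega
    have hlt : f j < j := chain_lt hk hm hadm hAeq hnn hchain
    have hdiv2 : posOf mu (f j) / k = m - v - 1 := by
      rw [hpi, divSubK (by omega) hpk, hdiv]
    obtain ⟨h1, h1b⟩ := habs_nat hAeq (f j)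
    rw [hdiv2] at h1
    have h2 : mu (f j) = (v : ℤ) := by
      have hx := hnn (f j)
      clear h1b
      omega
    refine ⟨?_, h2⟩
    have : (f j : ℕ) < (j : ℕ) := hlt
    omega
  · intro j1 hj1 j2 hj2 heq
    simp only [Finset.coe_filter, Set.mem_setOf_eq, Finset.mem_univ, true_and] at hj1 hj2
    have hpk1 := (hkey j1 hj1.2).1
    have hpk2 := (hkey j2 hj2.2).1
    have h1 : posOf mu (f j1) = posOf mu (f j2) := by rw [heq]
    rw [hposf j1, hposf j2] at h1
    exact posOf_injective (lam := mu) (by omega)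

include hk hm hadm hAeq hnn in
lemma Ncnt_mono (t : ℕ) : ∀ v w : ℕ, v ≤ w → w ≤ m - 1 → Ncnt mu t v ≤ Ncnt mu t w := by
  intro v w
  induction w with
  | zero =>
    intro hvw _
    have : v = 0 := by omega
    subst this
    exact le_refl _
  | succ w ihw =>
    intro hvw hw
    rcases Nat.lt_or_ge v (w + 1) with h | h
    · have h1 : Ncnt mu t v ≤ Ncnt mu t w := ihw (by omega) (by omega)
      have h2 : Ncnt mu t ((w + 1) - 1) ≤ Ncnt mu t (w + 1) :=
        Ncnt_step hk hm hadm hAeq hnn t (w + 1) (by omega) hw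
      simp only [Nat.add_sub_cancel] at h2
      omega
    · have : v = w + 1 := by omega
      subst this
      exact le_refl _

include hk hm hadm hAeq hnn in
lemma hub_of_hAeq : ∀ i, mu i ≤ (m : ℤ) - 1 := by
  intro i
  obtain ⟨h1, h1b⟩ := habs_nat hAeq i
  have h2 := hnn i
  generalize hD : posOf mu i / k = D at h1 h1b
  omega

include hk hm hadm hAeq hnn in
lemma Ngeq_mu_lower (t c : ℕ) (ht : t ≤ k * m) (hc1 : 1 ≤ c) (hc2 : c ≤ m - 1) :
    (t / m) * (m - c) + min (t % m) (m - c) ≤ Ngeq mu t c := by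
  rw [Ngeq_eq_sum hm hnn (hub_of_hAeq hk hm hadm hAeq hnn) t c hc1]
  exact top_sum_lower hm (fun v w hvw hw => Ncnt_mono hk hm hadm hAeq hnn t v w hvw hw)
    (Ncnt_total hm hnn (hub_of_hAeq hk hm hadm hAeq hnn) t ht)
    (Nat.div_add_mod' t m).symm (Nat.mod_lt _ (by omega)) hc1 hc2

end

end MainArg


section LamUpper

variable {k m : ℕ}

lemma lamMod_ub (hm : 1 ≤ m) (i : Fin (k * m)) : lamMod k m i ≤ (m : ℤ) - 1 := by
  unfold lamMod
  have : (0 : ℤ) ≤ (((i : ℕ) % m : ℕ) : ℤ) := by positivity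
  omega

lemma Ngeq_lam_upper (hk : 1 ≤ k) (hm : 1 ≤ m) (t c : ℕ) (ht : t ≤ k * m)
    (hc1 : 1 ≤ c) (hc2 : c ≤ m - 1) :
    Ngeq (lamMod k m) t c ≤ (t / m) * (m - c) + min (t % m) (m - c) := by
  classical
  have hdm := Nat.div_add_mod t m
  have hrm : t % m < m := Nat.mod_lt _ (by omega)
  have hj0 : 0 < m - c := by omega
  unfold Ngeq
  have hset : (Finset.univ.filter
        (fun i : Fin (k * m) => (i : ℕ) < t ∧ (c : ℤ) ≤ lamMod k m i)) =
      (Finset.univ.filter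
        (fun i : Fin (k * m) => (i : ℕ) < t ∧ (i : ℕ) % m < m - c)) := by
    apply Finset.filter_congr
    intro i _
    unfold lamMod
    have him : (i : ℕ) % m < m := Nat.mod_lt _ (by omega)
    constructor
    · rintro ⟨hi1, hi2⟩
      exact ⟨hi1, by omega⟩
    · rintro ⟨hi1, hi2⟩
      exact ⟨hi1, by omega⟩
  rw [hset]
  have hdivq : ∀ i : Fin (k * m), (i : ℕ) < t → ¬ ((i : ℕ) / m < t / m) →
      (i : ℕ) / m = t / m ∧ (i : ℕ) % m < t % m := by
    intro i hit hnlt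
    have hA := Nat.div_add_mod (i : ℕ) m
    have hB : m * (t / m) ≤ m * ((i : ℕ) / m) := Nat.mul_le_mul_left m (by omega)
    have hC : (i : ℕ) / m < t / m + 1 := by
      rw [Nat.div_lt_iff_lt_mul (by omega : 0 < m)]
      have : (t / m + 1) * m = (t / m) * m + m := Nat.succ_mul _ _
      have hcomm : (t / m) * m = m * (t / m) := Nat.mul_comm _ _
      omega
    have hD : (i : ℕ) / m = t / m := by omega
    refine ⟨hD, ?_⟩
    rw [hD] at hA
    omega
  have hcard := Finset.card_le_card_of_injOn
    (fun i : Fin (k * m) =>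
      if (i : ℕ) / m < t / m then (m - c) * ((i : ℕ) / m) + (i : ℕ) % m
      else (m - c) * (t / m) + (i : ℕ) % m)
    (s := Finset.univ.filter
        (fun i : Fin (k * m) => (i : ℕ) < t ∧ (i : ℕ) % m < m - c))
    (t := Finset.range ((t / m) * (m - c) + min (t % m) (m - c)))
    ?_ ?_
  · rw [Finset.card_range] at hcard
    exact hcard
  · intro i hi
    simp only [Finset.coe_filter, Set.mem_setOf_eq, Finset.mem_univ, true_and] at hi
    simp only [Finset.mem_coe, Finset.mem_range]
    have hcm : (m - c) * (t / m) = (t / m) * (m - c) := Nat.mul_comm _ _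
    by_cases hcase : (i : ℕ) / m < t / m
    · rw [if_pos hcase]
      have h5 : (m - c) * ((i : ℕ) / m) + (i : ℕ) % m < (m - c) * (t / m) + 0 :=
        (base_lt_iff hi.2 hj0).mpr (Or.inl hcase)
      omega
    · rw [if_neg hcase]
      have h6 := hdivq i hi.1 hcase
      have h7 : min (t % m) (m - c) > (i : ℕ) % m := by
        have := h6.2
        have := hi.2
        omega
      omega
  · intro i1 hi1 i2 hi2 heq
    simp only [Finset.coe_filter, Set.mem_setOf_eq, Finset.mem_univ, true_and] at hi1 hi2
    simp only at heq
    have hA1 := Nat.div_add_mod (i1 : ℕ) m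
    have hA2 := Nat.div_add_mod (i2 : ℕ) m
    by_cases c1 : (i1 : ℕ) / m < t / m <;> by_cases c2 : (i2 : ℕ) / m < t / m
    · rw [if_pos c1, if_pos c2] at heq
      have h8 := base_eq hi1.2 hi2.2 heq
      apply Fin.ext
      have h9 : m * ((i1 : ℕ) / m) = m * ((i2 : ℕ) / m) := by rw [h8.1]
      omega
    · rw [if_pos c1, if_neg c2] at heq
      exfalso
      have h5 : (m - c) * ((i1 : ℕ) / m) + (i1 : ℕ) % m < (m - c) * (t / m) + 0 :=
        (base_lt_iff hi1.2 hj0).mpr (Or.inl c1)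
      omega
    · rw [if_neg c1, if_pos c2] at heq
      exfalso
      have h5 : (m - c) * ((i2 : ℕ) / m) + (i2 : ℕ) % m < (m - c) * (t / m) + 0 :=
        (base_lt_iff hi2.2 hj0).mpr (Or.inl c2)
      omega
    · rw [if_neg c1, if_neg c2] at heq
      have h6 := hdivq i1 hi1.1 c1
      have h7 := hdivq i2 hi2.1 c2
      apply Fin.ext
      have h9 : m * ((i1 : ℕ) / m) = m * ((i2 : ℕ) / m) := by rw [h6.1, h7.1]
      omega

end LamUpper

/-- for n = km, the k-fold repetition λ of (m−1,…,1,0) is (k+1,1)-admissible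
and is the unique (k+1,1)-admissible element μ with μ ⪯ λ. -/
theorem stmt8 (k m : ℕ) (hk : 1 ≤ k) (hm : 1 ≤ m) :
    Admissible ((k : ℤ) + 1) 1
      (fun i : Fin (k * m) => (m : ℤ) - 1 - ((i : ℕ) % m : ℕ)) ∧
    ∀ mu : Fin (k * m) → ℤ,
      Admissible ((k : ℤ) + 1) 1 mu →
      (SuccOrd (fun i : Fin (k * m) => (m : ℤ) - 1 - ((i : ℕ) % m : ℕ)) mu ∨
        mu = fun i : Fin (k * m) => (m : ℤ) - 1 - ((i : ℕ) % m : ℕ)) →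
      mu = fun i : Fin (k * m) => (m : ℤ) - 1 - ((i : ℕ) % m : ℕ) := by
  have hn1 : 1 ≤ k * m := Nat.one_le_iff_ne_zero.mpr (by positivity)
  have hlamE : (fun i : Fin (k * m) => (m : ℤ) - 1 - ((i : ℕ) % m : ℕ)) = lamMod k m := rfl
  rw [hlamE]
  constructor
  · exact admissible_lamMod hk hm
  · intro mu hadm hord
    rcases hord with hord | h
    · -- μ ≺ λ
      have hLam : ∀ p : Fin (k * m),
          lamPlus (lamMod k m) p = (m : ℤ) - 1 - (((p : ℕ) / k : ℕ) : ℤ) :=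
        lamPlus_lamMod hk hm
      rcases hord with ⟨hdom, hne⟩ | ⟨heq, hdom, _⟩
      · -- case 1 : |μ|⁺ strictly below |λ|⁺ : impossible
        exfalso
        have hAlow : ∀ p : Fin (k * m),
            (m : ℤ) - 1 - (((p : ℕ) / k : ℕ) : ℤ) ≤ lamPlus mu p := by
          intro p
          rw [lamPlus_eq_Aof]
          have := Aof_lower (n := k * m) rfl hk hadm (k * m) (p : ℕ) p.isLt (by omega)
          exact this
        have hge : ∀ p ∈ (Finset.univ : Finset (Fin (k * m))),
            lamPlus (lamMod k m) p ≤ lamPlus mu p := by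
          intro p _
          rw [hLam p]
          exact hAlow p
        set jl : Fin (k * m) := ⟨k * m - 1, by omega⟩ with hjl
        have hfil : Finset.univ.filter (fun x : Fin (k * m) => x ≤ jl) = Finset.univ := by
          ext x
          simp only [Finset.mem_filter, Finset.mem_univ, true_and, iff_true, Fin.le_def, hjl]
          have := x.isLt
          omega
        have hd := hdom jl
        unfold psum at hd
        rw [hfil] at hd
        have hsums : ∑ p, lamPlus (lamMod k m) p = ∑ p, lamPlus mu p :=
          le_antisymm (Finset.sum_le_sum hge) hd
        have hpt := (Finset.sum_eq_sum_iff_of_le hge).mp hsums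
        exact hne (funext fun p => hpt p (Finset.mem_univ p))
      · -- case 2 : |μ|⁺ = |λ|⁺ and μ ≤ λ in dominance order
        have hAeq : ∀ p : Fin (k * m),
            Aof mu p = (m : ℤ) - 1 - (((p : ℕ) / k : ℕ) : ℤ) := by
          intro p
          rw [← lamPlus_eq_Aof, ← heq, hLam]
        have hnn := mu_nonneg hk hm hadm hAeq
        have hub := hub_of_hAeq hk hm hadm hAeq hnn
        have hpsum : ∀ j, psum (lamMod k m) j ≤ psum mu j := by
          intro j
          rw [psum_eq_prefix, psum_eq_prefix]
          have ht : (j : ℕ) + 1 ≤ k * m := j.isLt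
          rw [prefix_sum_eq_sum_Ngeq hm hnn hub ((j : ℕ) + 1),
            prefix_sum_eq_sum_Ngeq hm (lamMod_nonneg hm) (lamMod_ub hm) ((j : ℕ) + 1)]
          apply Finset.sum_le_sum
          intro c hc
          simp only [Finset.mem_Icc] at hc
          have h1 := Ngeq_lam_upper hk hm ((j : ℕ) + 1) c ht hc.1 hc.2
          have h2 := Ngeq_mu_lower hk hm hadm hAeq hnn ((j : ℕ) + 1) c ht hc.1 hc.2
          exact_mod_cast le_trans h1 h2
        exact eq_of_psum_eq (fun j => le_antisymm (hdom j) (hpsum j))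
    · exact h

end CCnDAHA
end

section
/- Let n ≥ 2. For any λ ∈ ℤ^n and any 0 ≤ i ≤ n, if ⟨s_i·λ, α_i⟩ > 0 then s_i·λ ≻ λ. -/
open scoped Classical

namespace CCnDAHA

variable {n : ℕ}




private lemma sum_two {n : ℕ} (S : Finset (Fin n)) (d : Fin n → ℤ) (a b : Fin n) (hab : a ≠ b)
    (h : ∀ x, x ≠ a → x ≠ b → d x = 0) :
    ∑ x ∈ S, d x = (if a ∈ S then d a else 0) + (if b ∈ S then d b else 0) := by
  have hc : ∀ x ∈ S, d x = (if x = a then d a else 0) + (if x = b then d b else 0) := by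
    intro x _
    by_cases hxa : x = a
    · subst hxa; simp [hab]
    · by_cases hxb : x = b
      · subst hxb; simp [hxa]
      · simp [hxa, hxb, h x hxa hxb]
  rw [Finset.sum_congr rfl hc, Finset.sum_add_distrib, Finset.sum_ite_eq' S a, Finset.sum_ite_eq' S b]

private lemma countP_take_aux (L : List ℤ) (hL : L.Pairwise (fun x y => y ≤ x)) (k : ℕ)
    (hk : k < L.length) (x : ℤ) (hx : x ≤ L.get ⟨k, hk⟩) :
    k + 1 ≤ L.countP (fun y => decide (x ≤ y)) := by
  have hsplit := List.countP_append (l₁ := L.take (k+1)) (l₂ := L.drop (k+1)) (p := fun y => decide (x ≤ y))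
  rw [List.take_append_drop] at hsplit
  have h1 : (L.take (k+1)).countP (fun y => decide (x ≤ y)) = (L.take (k+1)).length := by
    apply List.countP_eq_length.2
    intro a ha
    obtain ⟨i, hi, rfl⟩ := List.getElem_of_mem ha
    have hi' : i < L.length := by simp [List.length_take] at hi; omega
    rw [List.getElem_take]
    simp only [decide_eq_true_eq]
    refine le_trans hx ?_
    rcases Nat.lt_or_ge i k with hik | hik
    · simpa [List.get_eq_getElem] using hL.rel_get_of_lt (a := ⟨i, hi'⟩) (b := ⟨k, hk⟩) hik
    · have : i = k := by simp [List.length_take] at hi; omega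
      subst this
      simp [List.get_eq_getElem]
  have h2 : (L.take (k+1)).length = k + 1 := by
    simp [List.length_take]; omega
  omega

private lemma le_get_of_countP (L : List ℤ) (hL : L.Pairwise (fun x y => y ≤ x)) (k : ℕ)
    (hk : k < L.length) (x : ℤ) (hcnt : k + 1 ≤ L.countP (fun y => decide (x ≤ y))) :
    x ≤ L.get ⟨k, hk⟩ := by
  by_contra hlt
  push_neg at hlt
  have hsplit := List.countP_append (l₁ := L.take k) (l₂ := L.drop k) (p := fun y => decide (x ≤ y))
  rw [List.take_append_drop] at hsplit
  have h0 : (L.drop k).countP (fun y => decide (x ≤ y)) = 0 := by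
    apply List.countP_eq_zero.2
    intro a ha
    obtain ⟨i, hi, rfl⟩ := List.getElem_of_mem ha
    have hi' : k + i < L.length := by simp [List.length_drop] at hi; omega
    rw [List.getElem_drop]
    simp only [decide_eq_true_eq, not_le]
    refine lt_of_le_of_lt ?_ hlt
    rcases Nat.eq_zero_or_pos i with h | h
    · subst h; simp [List.get_eq_getElem]
    · simpa [List.get_eq_getElem] using hL.rel_get_of_lt (a := ⟨k, hk⟩) (b := ⟨k + i, hi'⟩) (by simp; omega)
  have h2 : (L.take k).countP (fun y => decide (x ≤ y)) ≤ k := by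
    refine le_trans (List.countP_le_length (p := fun y => decide (x ≤ y))) ?_
    simp [List.length_take]
  omega

private lemma getD_mono (L L' : List ℤ) (hL : L.Pairwise (fun x y => y ≤ x))
    (hL' : L'.Pairwise (fun x y => y ≤ x)) (hlen : L.length = L'.length)
    (hcount : ∀ x : ℤ, L.countP (fun y => decide (x ≤ y)) ≤ L'.countP (fun y => decide (x ≤ y)))
    (k : ℕ) (hk : k < L.length) : L.getD k 0 ≤ L'.getD k 0 := by
  have hk' : k < L'.length := hlen ▸ hk
  rw [List.getD_eq_getElem L 0 hk, List.getD_eq_getElem L' 0 hk']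
  have h1 := countP_take_aux L hL k hk (L.get ⟨k, hk⟩) le_rfl
  have h2 := le_get_of_countP L' hL' k hk' (L.get ⟨k, hk⟩) (le_trans h1 (hcount _))
  simpa [List.get_eq_getElem] using h2

private lemma sum_getD (L : List ℤ) {m : ℕ} (h : L.length = m) :
    ∑ k : Fin m, L.getD (k : ℕ) 0 = L.sum := by
  subst h
  rw [← Fin.sum_univ_getElem L]
  exact Finset.sum_congr rfl fun k _ => List.getD_eq_getElem L 0 k.isLt

private lemma dotAct_zero {n : ℕ} (lam : Fin n → ℤ) (j : Fin n) :
    dotAct 0 lam j = if (j : ℕ) = 0 then -1 - lam j else lam j := by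
  simp [dotAct]

private lemma dotAct_n {n : ℕ} (hn : n ≠ 0) (lam : Fin n → ℤ) (j : Fin n) :
    dotAct n lam j = if (j : ℕ) + 1 = n then -lam j else lam j := by
  rw [dotAct, if_neg hn, if_pos rfl]

private lemma dotAct_mid_left {n i : ℕ} (lam : Fin n → ℤ) (h0 : 0 < i) (hin : i < n) :
    dotAct i lam ⟨i - 1, by omega⟩ = lam ⟨i, hin⟩ := by
  rw [dotAct, if_neg (by omega), if_neg (by omega), dif_pos ⟨by simp; omega, hin⟩]
  congr 1
  exact Fin.ext (by simp; omega)

private lemma dotAct_mid_right {n i : ℕ} (lam : Fin n → ℤ) (h0 : 0 < i) (hin : i < n) :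
    dotAct i lam ⟨i, hin⟩ = lam ⟨i - 1, by omega⟩ := by
  rw [dotAct, if_neg (by omega), if_neg (by omega), dif_neg (by simp), dif_pos (by simp)]

private lemma dotAct_mid_other {n i : ℕ} (lam : Fin n → ℤ) (h0 : 0 < i) (hin : i < n)
    (j : Fin n) (hj1 : (j : ℕ) + 1 ≠ i) (hj2 : (j : ℕ) ≠ i) :
    dotAct i lam j = lam j := by
  rw [dotAct, if_neg (by omega), if_neg (by omega), dif_neg (by simp [hj1]), dif_neg (by simp [hj2])]

private lemma lamPlus_congr {n : ℕ} {lam mu : Fin n → ℤ}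
    (h : Multiset.map (fun i => |lam i|) Finset.univ.val
       = Multiset.map (fun i => |mu i|) Finset.univ.val) :
    lamPlus lam = lamPlus mu := by
  funext j
  unfold lamPlus
  rw [h]

/-- if ⟨s_i·λ, α_i⟩ > 0 then s_i·λ ≻ λ. -/
theorem stmt9 (n : ℕ) (hn : 2 ≤ n) (lam : Fin n → ℤ) (i : ℕ) (hi : i ≤ n)
    (hpos : 0 < pairing i (dotAct i lam)) :
    SuccOrd (dotAct i lam) lam := by
  have hn0 : n ≠ 0 := by omega
  set mu := dotAct i lam with hmu
  by_cases h0 : i = 0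
  · -- CASE i = 0
    subst h0
    obtain ⟨z, hzv⟩ : ∃ z : Fin n, (z : ℕ) = 0 := ⟨⟨0, by omega⟩, rfl⟩
    have hmuz : mu z = -1 - lam z := by rw [hmu, dotAct_zero, if_pos hzv]
    have hmuo : ∀ j, j ≠ z → mu j = lam j := by
      intro j hj
      rw [hmu, dotAct_zero, if_neg (fun h => hj (Fin.ext (by omega)))]
    have hpair : pairing 0 mu = -2 * (-1 - lam z) := by
      rw [pairing, dif_neg hn0, if_pos rfl]
      have e : (⟨0, by omega⟩ : Fin n) = z := Fin.ext (by simp; omega)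
      rw [e, hmuz]
    rw [hpair] at hpos
    have hlz : 0 ≤ lam z := by omega
    -- multiset decomposition
    have huniv : (Finset.univ.val : Multiset (Fin n)) = z ::ₘ Finset.univ.val.erase z :=
      (Multiset.cons_erase (by simp)).symm
    have hM : Multiset.map (fun k => |lam k|) Finset.univ.val
        = |lam z| ::ₘ Multiset.map (fun k => |lam k|) (Finset.univ.val.erase z) := by
      conv_lhs => rw [huniv]
      rw [Multiset.map_cons]
    have hM' : Multiset.map (fun k => |mu k|) Finset.univ.val
        = |mu z| ::ₘ Multiset.map (fun k => |lam k|) (Finset.univ.val.erase z) := by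
      conv_lhs => rw [huniv]
      rw [Multiset.map_cons]
      congr 1
      refine Multiset.map_congr rfl fun x hx => ?_
      have hxz : x ≠ z :=
        ((Multiset.Nodup.mem_erase_iff Finset.univ.nodup).1 hx).1
      rw [hmuo x hxz]
    have habs : |mu z| = |lam z| + 1 := by
      rw [hmuz, abs_of_nonpos (by omega), abs_of_nonneg hlz]; ring
    have hcnt : ∀ x : ℤ, Multiset.countP (fun y => x ≤ y) (Multiset.map (fun k => |lam k|) Finset.univ.val)
        ≤ Multiset.countP (fun y => x ≤ y) (Multiset.map (fun k => |mu k|) Finset.univ.val) := by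
      intro x
      rw [hM, hM', Multiset.countP_cons, Multiset.countP_cons, habs]
      split_ifs <;> omega
    have hsumM : (Multiset.map (fun k => |mu k|) Finset.univ.val).sum
        = (Multiset.map (fun k => |lam k|) Finset.univ.val).sum + 1 := by
      rw [hM, hM', habs, Multiset.sum_cons, Multiset.sum_cons]; ring
    -- list level
    have hplam : ∀ j : Fin n, lamPlus lam j
        = ((Multiset.sort (Multiset.map (fun k => |lam k|) Finset.univ.val) (· ≤ ·)).reverse).getD (j : ℕ) 0 :=
      fun j => rfl
    have hpmu : ∀ j : Fin n, lamPlus mu j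
        = ((Multiset.sort (Multiset.map (fun k => |mu k|) Finset.univ.val) (· ≤ ·)).reverse).getD (j : ℕ) 0 :=
      fun j => rfl
    have hlenL : ∀ f : Fin n → ℤ,
        ((Multiset.sort (Multiset.map (fun k => |f k|) Finset.univ.val) (· ≤ ·)).reverse).length = n := by
      intro f
      rw [List.length_reverse, Multiset.length_sort, Multiset.card_map]
      exact Finset.card_fin n
    have hsort : ∀ f : Fin n → ℤ,
        ((Multiset.sort (Multiset.map (fun k => |f k|) Finset.univ.val) (· ≤ ·)).reverse).Pairwise
          (fun x y => y ≤ x) := by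
      intro f
      rw [List.pairwise_reverse]
      exact Multiset.pairwise_sort (Multiset.map (fun k => |f k|) Finset.univ.val) (· ≤ ·)
    have hcoe : ∀ f : Fin n → ℤ,
        ((((Multiset.sort (Multiset.map (fun k => |f k|) Finset.univ.val) (· ≤ ·)).reverse : List ℤ)) : Multiset ℤ)
          = Multiset.map (fun k => |f k|) Finset.univ.val := by
      intro f
      rw [Multiset.coe_reverse, Multiset.sort_eq]
    have hLcnt : ∀ (f : Fin n → ℤ) (x : ℤ),
        ((Multiset.sort (Multiset.map (fun k => |f k|) Finset.univ.val) (· ≤ ·)).reverse).countP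
            (fun y => decide (x ≤ y))
          = Multiset.countP (fun y => x ≤ y) (Multiset.map (fun k => |f k|) Finset.univ.val) := by
      intro f x
      conv_rhs => rw [← hcoe f]
      rw [Multiset.coe_countP]
    have hpoint : ∀ k : Fin n, lamPlus lam k ≤ lamPlus mu k := by
      intro k
      rw [hplam k, hpmu k]
      refine getD_mono _ _ (hsort lam) (hsort mu) (by rw [hlenL, hlenL]) ?_ _ ?_
      · intro x
        rw [hLcnt lam x, hLcnt mu x]
        exact hcnt x
      · rw [hlenL]
        exact k.isLt
    have hdomP : DomLE (lamPlus lam) (lamPlus mu) := by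
      intro j
      unfold psum
      exact Finset.sum_le_sum fun k _ => hpoint k
    have hsums : ∀ f : Fin n → ℤ,
        ∑ k : Fin n, lamPlus f k = (Multiset.map (fun k => |f k|) Finset.univ.val).sum := by
      intro f
      have h1 : ∑ k : Fin n, lamPlus f k
          = ∑ k : Fin n,
              ((Multiset.sort (Multiset.map (fun k => |f k|) Finset.univ.val) (· ≤ ·)).reverse).getD (k : ℕ) 0 :=
        rfl
      rw [h1, sum_getD _ (hlenL f)]
      conv_rhs => rw [← hcoe f]
      exact (Multiset.sum_coe _).symm
    have hne : lamPlus mu ≠ lamPlus lam := by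
      intro h
      have h1 : ∑ k : Fin n, lamPlus mu k = ∑ k : Fin n, lamPlus lam k := by rw [h]
      rw [hsums lam, hsums mu, hsumM] at h1
      omega
    exact Or.inl ⟨hdomP, hne⟩
  by_cases hiN : i = n
  · -- CASE i = n
    subst hiN
    obtain ⟨a, hav⟩ : ∃ a : Fin i, (a : ℕ) = i - 1 := ⟨⟨i - 1, by omega⟩, rfl⟩
    have hmua : mu a = -lam a := by
      rw [hmu, dotAct_n hn0, if_pos (by omega)]
    have hmuo : ∀ j, j ≠ a → mu j = lam j := by
      intro j hj
      rw [hmu, dotAct_n hn0, if_neg (fun h => hj (Fin.ext (by have := j.isLt; omega)))]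
    have hpair : pairing i mu = -2 * lam a := by
      rw [pairing, dif_neg hn0, if_neg hn0, if_pos rfl]
      have e : (⟨i - 1, by omega⟩ : Fin i) = a := Fin.ext (by simp; omega)
      rw [e, hmua]; ring
    rw [hpair] at hpos
    have hla : lam a < 0 := by omega
    have hms : Multiset.map (fun k => |mu k|) Finset.univ.val
        = Multiset.map (fun k => |lam k|) Finset.univ.val := by
      refine Multiset.map_congr rfl fun x _ => ?_
      by_cases hx : x = a
      · subst hx; rw [hmua, abs_neg]
      · rw [hmuo x hx]
    have hb0 : (⟨0, by omega⟩ : Fin i) ≠ a := fun h => by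
      have := congrArg Fin.val h; simp [hav] at this; omega
    have hdom : DomLE lam mu := by
      intro j
      have key := sum_two (Finset.univ.filter (fun x => x ≤ j)) (fun x => mu x - lam x) a
        ⟨0, by omega⟩ (Ne.symm hb0)
        (fun x hxa _ => by show mu x - lam x = 0; rw [hmuo x hxa]; ring)
      have hps : psum mu j - psum lam j
          = ∑ x ∈ Finset.univ.filter (fun x => x ≤ j), (mu x - lam x) := by
        rw [psum, psum, Finset.sum_sub_distrib]
      rw [key] at hps
      rw [hmua, hmuo _ hb0] at hps
      have : psum lam j ≤ psum mu j := by split_ifs at hps <;> linarith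
      exact this
    have hne : mu ≠ lam := by
      intro h
      have := congrFun h a
      rw [hmua] at this
      omega
    exact Or.inr ⟨lamPlus_congr hms, hdom, hne⟩
  · -- CASE 0 < i < n
    have hin : i < n := by omega
    have hi0 : 0 < i := by omega
    obtain ⟨a, hav⟩ : ∃ a : Fin n, (a : ℕ) = i - 1 := ⟨⟨i - 1, by omega⟩, rfl⟩
    obtain ⟨b, hbv⟩ : ∃ b : Fin n, (b : ℕ) = i := ⟨⟨i, by omega⟩, rfl⟩
    have hea : a = ⟨i - 1, by omega⟩ := Fin.ext (by simp [hav])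
    have heb : b = ⟨i, by omega⟩ := Fin.ext (by simp [hbv])
    have hmua : mu a = lam b := by
      rw [hmu, hea, dotAct_mid_left lam hi0 hin, heb]
    have hmub : mu b = lam a := by
      rw [hmu, heb, dotAct_mid_right lam hi0 hin, hea]
    have hmuo : ∀ j, j ≠ a → j ≠ b → mu j = lam j := by
      intro j hja hjb
      refine dotAct_mid_other lam hi0 hin j ?_ ?_
      · intro h; exact hja (Fin.ext (by omega))
      · intro h; exact hjb (Fin.ext (by omega))
    have hpair : pairing i mu = lam b - lam a := by
      rw [pairing, dif_neg hn0, if_neg h0, if_neg hiN]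
      have e1 : (⟨(i - 1) % n, Nat.mod_lt _ (by omega)⟩ : Fin n) = a :=
        Fin.ext (by simp [Nat.mod_eq_of_lt (show i - 1 < n by omega)]; omega)
      have e2 : (⟨i % n, Nat.mod_lt _ (by omega)⟩ : Fin n) = b :=
        Fin.ext (by simp [Nat.mod_eq_of_lt hin]; omega)
      rw [e1, e2, hmua, hmub]
    rw [hpair] at hpos
    have hab : a ≠ b := fun h => by
      have := congrArg Fin.val h; omega
    have hswap : ∀ j, mu j = lam (Equiv.swap a b j) := by
      intro j
      by_cases hja : j = a
      · subst hja; rw [Equiv.swap_apply_left]; exact hmua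
      by_cases hjb : j = b
      · subst hjb; rw [Equiv.swap_apply_right]; exact hmub
      · rw [Equiv.swap_apply_of_ne_of_ne hja hjb]; exact hmuo j hja hjb
    have hms : Multiset.map (fun k => |mu k|) Finset.univ.val
        = Multiset.map (fun k => |lam k|) Finset.univ.val := by
      have h1 : Multiset.map (fun k => |mu k|) Finset.univ.val
          = Multiset.map (fun k => |lam (Equiv.swap a b k)|) Finset.univ.val :=
        Multiset.map_congr rfl fun x _ => by rw [hswap x]
      have h2 : Multiset.map (fun k => |lam (Equiv.swap a b k)|) Finset.univ.val
          = Multiset.map (fun k => |lam k|) (Multiset.map (⇑(Equiv.swap a b)) Finset.univ.val) := by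
        rw [Multiset.map_map]; rfl
      have h3 : Multiset.map (⇑(Equiv.swap a b)) Finset.univ.val = Finset.univ.val := by
        simpa [Finset.map_val] using congrArg Finset.val (Finset.map_univ_equiv (Equiv.swap a b))
      rw [h1, h2, h3]
    have hdom : DomLE lam mu := by
      intro j
      have key := sum_two (Finset.univ.filter (fun x => x ≤ j)) (fun x => mu x - lam x) a b hab
        (fun x hxa hxb => by show mu x - lam x = 0; rw [hmuo x hxa hxb]; ring)
      have hps : psum mu j - psum lam j
          = ∑ x ∈ Finset.univ.filter (fun x => x ≤ j), (mu x - lam x) := by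
        rw [psum, psum, Finset.sum_sub_distrib]
      rw [key] at hps
      simp only [Finset.mem_filter, Finset.mem_univ, true_and] at hps
      rw [hmua, hmub] at hps
      by_cases hbj : b ≤ j
      · have haj : a ≤ j := by
          have h1 : (b : ℕ) ≤ (j : ℕ) := hbj
          show (a : ℕ) ≤ (j : ℕ)
          omega
        rw [if_pos haj, if_pos hbj] at hps
        linarith
      · by_cases haj : a ≤ j
        · rw [if_pos haj, if_neg hbj] at hps
          linarith
        · rw [if_neg haj, if_neg hbj] at hps
          linarith
    have hne : mu ≠ lam := by
      intro h
      have := congrFun h a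
      rw [hmua] at this
      omega
    exact Or.inr ⟨lamPlus_congr hms, hdom, hne⟩

end CCnDAHA
end

section
/- Fix integers n ≥ 2, r−1 ≥ 1, and k with 2n−2 ≥ k+1 ≥ 0. Let λ ∈ ℤ^n satisfy λ_i ≥ r−1 for all 1 ≤ i ≤ n. Suppose μ ∈ ℤ^n and integers m_1, …, m_n satisfy μ_i = λ_i + (r−1)m_i, ρ(μ)_i = ρ(λ)_i + (k+1)m_i, and σ(μ)_i = σ(λ)_i + 2m_i for all 1 ≤ i ≤ n. Then μ = λ. -/
open scoped Classical

namespace CCnDAHA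

variable {n : ℕ}




/-- λ with λ_i ≥ r−1 has a non-degenerate eigenvalue under
t^{k+1}q^{r−1}(a*)² = 1: if μ = λ + (r−1)m, ρ(μ) = ρ(λ) + (k+1)m and σ(μ) = σ(λ) + 2m
componentwise for an integer vector m, then μ = λ. -/
theorem stmt12 (n : ℕ) (hn : 2 ≤ n) (r k : ℤ) (hr : 1 ≤ r - 1)
    (hk0 : 0 ≤ k + 1) (hk2n : k + 1 ≤ 2 * (n : ℤ) - 2)
    (lam : Fin n → ℤ) (hlarge : ∀ i, r - 1 ≤ lam i)
    (mu : Fin n → ℤ) (m : Fin n → ℤ)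
    (heq : ∀ i, mu i = lam i + (r - 1) * m i)
    (hrho : ∀ i, rho mu i = rho lam i + (k + 1) * m i)
    (hsg : ∀ i, sgn mu i = sgn lam i + 2 * m i) :
    mu = lam := by
  funext i
  have h1 : 0 ≤ lam i := le_trans (by linarith) (hlarge i)
  have hsl : sgn lam i = 1 := by simp [sgn, h1]
  have hs := hsg i
  have he := heq i
  have hl := hlarge i
  by_cases h2 : 0 ≤ mu i
  · have hsm : sgn mu i = 1 := by simp [sgn, h2]
    rw [hsm, hsl] at hs
    have hm : m i = 0 := by linarith
    rw [hm] at he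
    simpa using he
  · have hsm : sgn mu i = -1 := by simp [sgn, h2]
    rw [hsm, hsl] at hs
    have hm : m i = -1 := by linarith
    rw [hm] at he
    exfalso
    apply h2
    nlinarith

end CCnDAHA
end
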